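/- Let X be a normed space of dimension at least 2. Then numerical radius Birkhoff orthogonality in B(X) is neither left additive nor right additive: there exist operators T, S, R with T ⊥_{vB} R and S ⊥_{vB} R but not (T+S) ⊥_{vB} R, and operators T', S', R' with T' ⊥_{vB} S' and T' ⊥_{vB} R' but not T' ⊥_{vB} (S'+R'). -/

import Mathlib

open Filter Topology

variable {𝕜 : Type*} [RCLike 𝕜] {X : Type*} [NormedAddCommGroup X] [NormedSpace 𝕜 X]

/-- The numerical radius of a bounded linear operator on a normed space:
`v(T) = sup {|x*(Tx)| : x ∈ S_X, x* ∈ J(x)}`. -/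
noncomputable def nrad (T : X →L[𝕜] X) : ℝ :=
  sSup {r : ℝ | ∃ (x : X) (f : X →L[𝕜] 𝕜), ‖x‖ = 1 ∧ ‖f‖ = 1 ∧ f x = 1 ∧ r = ‖f (T x)‖}

/-- Numerical radius parallelism: `T ∥_v S`. -/
def NRadParallel (T S : X →L[𝕜] X) : Prop :=
  ∃ lam : 𝕜, ‖lam‖ = 1 ∧ nrad (T + lam • S) = nrad T + nrad S

/-- Numerical radius Birkhoff orthogonality: `T ⊥_{vB} S`. -/
def NRadBirkhoff (T S : X →L[𝕜] X) : Prop :=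
  ∀ α : 𝕜, nrad T ≤ nrad (T + α • S)

lemma nrad_bddAbove (T : X →L[𝕜] X) :
    BddAbove {r : ℝ | ∃ (x : X) (f : X →L[𝕜] 𝕜), ‖x‖ = 1 ∧ ‖f‖ = 1 ∧ f x = 1 ∧ r = ‖f (T x)‖} := by
  refine ⟨‖T‖, ?_⟩
  rintro r ⟨x, f, hx, hf, hfx, rfl⟩
  calc ‖f (T x)‖ ≤ ‖f‖ * ‖T x‖ := f.le_opNorm _
    _ ≤ 1 * (‖T‖ * ‖x‖) := by rw [hf]; exact by gcongr; exact T.le_opNorm x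
    _ = ‖T‖ := by rw [hx]; ring

lemma le_nrad (T : X →L[𝕜] X) {x : X} {f : X →L[𝕜] 𝕜} (hx : ‖x‖ = 1) (hf : ‖f‖ = 1)
    (hfx : f x = 1) : ‖f (T x)‖ ≤ nrad T :=
  le_csSup (nrad_bddAbove T) ⟨x, f, hx, hf, hfx, rfl⟩

lemma nrad_le {c : ℝ} (T : X →L[𝕜] X) (hc : 0 ≤ c)
    (h : ∀ (x : X) (f : X →L[𝕜] 𝕜), ‖x‖ = 1 → ‖f‖ = 1 → f x = 1 → ‖f (T x)‖ ≤ c) :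
    nrad T ≤ c := by
  apply Real.sSup_le _ hc
  rintro r ⟨x, f, hx, hf, hfx, rfl⟩
  exact h x f hx hf hfx

theorem stmt18 (hdim : 2 ≤ Module.rank 𝕜 X) :
    (∃ T S R : X →L[𝕜] X, NRadBirkhoff T R ∧ NRadBirkhoff S R ∧
      ¬ NRadBirkhoff (T + S) R) ∧
    (∃ T' S' R' : X →L[𝕜] X, NRadBirkhoff T' S' ∧ NRadBirkhoff T' R' ∧
      ¬ NRadBirkhoff T' (S' + R')) := by
  -- Setting up a unit vector `u`, a supporting functional `f` at `u`,
  -- a unit vector `x₀` with `f x₀ = 0` and a supporting functional `g₀` at `x₀`.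
  have hnt : Nontrivial X := rank_pos_iff_nontrivial.mp (lt_of_lt_of_le (by norm_num) hdim)
  obtain ⟨u₀, hu₀⟩ := exists_ne (0 : X)
  obtain ⟨v₀, hindep⟩ := exists_linearIndependent_pair_of_one_lt_rank
    (lt_of_lt_of_le (by norm_num) hdim) hu₀
  set u : X := (‖u₀‖ : 𝕜)⁻¹ • u₀ with hu_def
  have hn0 : (‖u₀‖ : 𝕜) ≠ 0 := by
    simpa using norm_ne_zero_iff.mpr hu₀
  have hu : ‖u‖ = 1 := by
    rw [hu_def, norm_smul, norm_inv, RCLike.norm_ofReal, abs_of_nonneg (norm_nonneg _),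
      inv_mul_cancel₀ (norm_ne_zero_iff.mpr hu₀)]
  have hune : u ≠ 0 := by
    simp [hu_def, smul_eq_zero, hu₀, hn0]
  obtain ⟨f, hf, hfu⟩ := exists_dual_vector 𝕜 u (norm_ne_zero_iff.mpr hune)
  rw [hu] at hfu
  have hfu1 : f u = 1 := by rw [hfu]; norm_num
  set w : X := v₀ - f v₀ • u with hw_def
  have hw : w ≠ 0 := by
    intro h
    rw [hw_def, sub_eq_zero] at h
    have : (f v₀ * (‖u₀‖ : 𝕜)⁻¹) • u₀ = v₀ := by
      rw [mul_smul]
      rw [hu_def] at h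
      exact h.symm
    exact (LinearIndependent.pair_iff' hu₀).mp hindep _ this
  have hnw : (‖w‖ : 𝕜) ≠ 0 := by simpa using norm_ne_zero_iff.mpr hw
  set x₀ : X := (‖w‖ : 𝕜)⁻¹ • w with hx₀_def
  have hx₀ : ‖x₀‖ = 1 := by
    rw [hx₀_def, norm_smul, norm_inv, RCLike.norm_ofReal, abs_of_nonneg (norm_nonneg _),
      inv_mul_cancel₀ (norm_ne_zero_iff.mpr hw)]
  have hx₀ne : x₀ ≠ 0 := by
    simp [hx₀_def, smul_eq_zero, hw, hnw]
  have hfw : f w = 0 := by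
    rw [hw_def]
    simp [hfu1]
  have hfx₀ : f x₀ = 0 := by
    rw [hx₀_def]
    simp [hfw]
  obtain ⟨g₀, hg₀, hg₀x₀⟩ := exists_dual_vector 𝕜 x₀ (norm_ne_zero_iff.mpr hx₀ne)
  rw [hx₀] at hg₀x₀
  have hg₀1 : g₀ x₀ = 1 := by rw [hg₀x₀]; norm_num
  -- The rank-one operator `P = f ⊗ u`.
  set P : X →L[𝕜] X := f.smulRight u with hP_def
  have hPapp : ∀ x : X, P x = f x • u := fun x => rfl
  have hPu : P u = u := by rw [hPapp, hfu1, one_smul]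
  have hPx₀ : P x₀ = 0 := by rw [hPapp, hfx₀, zero_smul]
  -- Basic numerical radius computations.
  have nrad_one : nrad (1 : X →L[𝕜] X) = 1 := by
    refine le_antisymm (nrad_le _ zero_le_one ?_) ?_
    · intro x g hx hg hgx
      simp [hgx]
    · have := le_nrad (1 : X →L[𝕜] X) hu hf hfu1
      simpa [hfu1] using this
  have nrad_zero : nrad (0 : X →L[𝕜] X) = 0 := by
    refine le_antisymm (nrad_le _ le_rfl ?_) ?_
    · intro x g hx hg hgx
      simp
    · have := le_nrad (0 : X →L[𝕜] X) hu hf hfu1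
      simpa using this
  have nrad_negP : nrad (-P) = 1 := by
    refine le_antisymm (nrad_le _ zero_le_one ?_) ?_
    · intro x g hx hg hgx
      have : g ((-P) x) = -(f x * g u) := by
        simp [hPapp, smul_eq_mul]
      rw [this, norm_neg, norm_mul]
      calc ‖f x‖ * ‖g u‖ ≤ (‖f‖ * ‖x‖) * (‖g‖ * ‖u‖) := by
            gcongr <;> [exact f.le_opNorm x; exact g.le_opNorm u]
        _ = 1 := by rw [hf, hx, hg, hu]; ring
    · have := le_nrad (-P) hu hf hfu1
      have heq : f ((-P) u) = -1 := by simp [hPu, hfu1]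
      rw [heq] at this
      simpa using this
  -- First statement: take `T = 1`, `S = -P`, `R = 1 - P`.
  constructor
  · refine ⟨1, -P, 1 - P, ?_, ?_, ?_⟩
    · intro α
      rw [nrad_one]
      have hval : f ((1 + α • (1 - P)) u) = 1 := by
        simp [hPu, hfu1]
      have := le_nrad (1 + α • (1 - P)) hu hf hfu1
      rw [hval] at this
      simpa using this
    · intro α
      rw [nrad_negP]
      have hval : f ((-P + α • (1 - P)) u) = -1 := by
        simp [hPu, hfu1]
      have := le_nrad (-P + α • (1 - P)) hu hf hfu1
      rw [hval] at this
      simpa using this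
    · intro hcon
      have hzero : (1 + -P) + (-1 : 𝕜) • (1 - P) = 0 := by module
      have h1 := hcon (-1)
      rw [hzero, nrad_zero] at h1
      have hval : g₀ ((1 + -P) x₀) = 1 := by
        simp [hPx₀, hg₀1]
      have h2 := le_nrad (1 + -P) hx₀ hg₀ hg₀1
      rw [hval] at h2
      simp only [norm_one] at h2
      linarith
  -- Second statement: take `T' = 1`, `S' = P`, `R' = 1 - P`.
  · refine ⟨1, P, 1 - P, ?_, ?_, ?_⟩
    · intro α
      rw [nrad_one]
      have hval : g₀ ((1 + α • P) x₀) = 1 := by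
        simp [hPx₀, hg₀1]
      have := le_nrad (1 + α • P) hx₀ hg₀ hg₀1
      rw [hval] at this
      simpa using this
    · intro α
      rw [nrad_one]
      have hval : f ((1 + α • (1 - P)) u) = 1 := by
        simp [hPu, hfu1]
      have := le_nrad (1 + α • (1 - P)) hu hf hfu1
      rw [hval] at this
      simpa using this
    · intro hcon
      have hsum : P + (1 - P) = (1 : X →L[𝕜] X) := by module
      have hzero : (1 : X →L[𝕜] X) + (-1 : 𝕜) • (1 : X →L[𝕜] X) = 0 := by module
      have h1 := hcon (-1)
      rw [hsum, hzero, nrad_zero, nrad_one] at h1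
      linarith
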